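/- Reduction via ansatz (3-36): let d1, d2, d3 be positive real constants with d1 > d3 and d1 ≠ d2, set κ = 1/√(d1 − d3), and let α0, α1, α2 be real constants. Suppose φ1, φ2, φ3 : ℝ → ℝ are differentiable and solve the ODE system φ1' + φ1(φ1 + φ2 − 1) − (α0(d1 − d3)/(d1 − d2))·φ3 = 0, φ2' + ((d2 − d3)/(d1 − d3))·φ2(φ1 + φ2 − 1) + (α0(d2 − d3)/(d1 − d2))·φ3 = 0, φ3' + φ3(φ1 + φ2) = 0. Define w(t,x) = φ3(t)·(α0 + α1·sin(κx)·exp(−d3κ²t) + α2·cos(κx)·exp(−d3κ²t)), u(t,x) = φ1(t) + ((d1 − d3)/(d1 − d2))·w(t,x), v(t,x) = φ2(t) − ((d1 − d3)/(d1 − d2))·w(t,x). Then (u, v, w) satisfies the HGF system (2-3*) at every point (t,x) ∈ ℝ × ℝ. -/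

import Mathlib

/-- Reduction via ansatz (3-36) to the HGF system (2-3*). -/
theorem hgf_reduction_ansatz_3_36
    (d1 d2 d3 : ℝ) (hd1 : 0 < d1) (hd2 : 0 < d2) (hd3 : 0 < d3)
    (hd13 : d3 < d1) (hd12 : d1 ≠ d2)
    (κ : ℝ) (hκ : κ = 1 / Real.sqrt (d1 - d3))
    (α0 α1 α2 : ℝ)
    (φ1 φ2 φ3 : ℝ → ℝ)
    (hφ1 : Differentiable ℝ φ1) (hφ2 : Differentiable ℝ φ2) (hφ3 : Differentiable ℝ φ3)
    (hode1 : ∀ t : ℝ, deriv φ1 t + φ1 t * (φ1 t + φ2 t - 1)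
        - (α0 * (d1 - d3) / (d1 - d2)) * φ3 t = 0)
    (hode2 : ∀ t : ℝ, deriv φ2 t + ((d2 - d3) / (d1 - d3)) * (φ2 t * (φ1 t + φ2 t - 1))
        + (α0 * (d2 - d3) / (d1 - d2)) * φ3 t = 0)
    (hode3 : ∀ t : ℝ, deriv φ3 t + φ3 t * (φ1 t + φ2 t) = 0)
    (u v w : ℝ → ℝ → ℝ)
    (hw : ∀ t x : ℝ, w t x = φ3 t * (α0 + α1 * Real.sin (κ * x) * Real.exp (-d3 * κ ^ 2 * t)
        + α2 * Real.cos (κ * x) * Real.exp (-d3 * κ ^ 2 * t)))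
    (hu : ∀ t x : ℝ, u t x = φ1 t + ((d1 - d3) / (d1 - d2)) * w t x)
    (hv : ∀ t x : ℝ, v t x = φ2 t - ((d1 - d3) / (d1 - d2)) * w t x) :
    ∀ t x : ℝ,
      deriv (fun s => u s x) t
        = d1 * deriv (fun y => deriv (fun z => u t z) y) x
          + u t x * (1 - u t x - v t x) ∧
      deriv (fun s => v s x) t
        = d2 * deriv (fun y => deriv (fun z => v t z) y) x
          + ((d2 - d3) / (d1 - d3)) * (v t x * (1 - u t x - v t x))
          + u t x * w t x + v t x * w t x ∧
      deriv (fun s => w s x) t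
        = d3 * deriv (fun y => deriv (fun z => w t z) y) x
          - u t x * w t x - v t x * w t x := by
  intro t x
  have hd13' : d1 - d3 ≠ 0 := by linarith
  have hd12' : d1 - d2 ≠ 0 := sub_ne_zero.mpr hd12
  have hκ2 : κ ^ 2 = 1 / (d1 - d3) := by
    rw [hκ, div_pow, one_pow, Real.sq_sqrt (by linarith)]
  obtain ⟨c, hc⟩ : ∃ c : ℝ, c = (d1 - d3) / (d1 - d2) := ⟨_, rfl⟩
  rw [show (d1 - d3) / (d1 - d2) = c from hc.symm] at hu hv
  -- abbreviations
  set Et : ℝ → ℝ := fun s => Real.exp (-d3 * κ ^ 2 * s) with hEt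
  -- derivative of Et
  have hEd : ∀ s : ℝ, HasDerivAt Et (-d3 * κ ^ 2 * Et s) s := by
    intro s
    have h := ((hasDerivAt_id s).const_mul (-d3 * κ ^ 2)).exp
    convert h using 1
    · simp [hEt, mul_comm]
    · simp only [hEt, id]; ring
  -- time derivative of the w-expression
  have hWt : ∀ s : ℝ, HasDerivAt
      (fun s' => φ3 s' * (α0 + α1 * Real.sin (κ * x) * Et s' + α2 * Real.cos (κ * x) * Et s'))
      (deriv φ3 s * (α0 + α1 * Real.sin (κ * x) * Et s + α2 * Real.cos (κ * x) * Et s)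
        + φ3 s * ((α1 * Real.sin (κ * x)) * (-d3 * κ ^ 2 * Et s)
            + (α2 * Real.cos (κ * x)) * (-d3 * κ ^ 2 * Et s))) s := by
    intro s
    have h1 : HasDerivAt
        (fun s' => α0 + α1 * Real.sin (κ * x) * Et s' + α2 * Real.cos (κ * x) * Et s')
        ((α1 * Real.sin (κ * x)) * (-d3 * κ ^ 2 * Et s)
          + (α2 * Real.cos (κ * x)) * (-d3 * κ ^ 2 * Et s)) s := by
      exact (((hEd s).const_mul (α1 * Real.sin (κ * x))).const_add α0).add
        ((hEd s).const_mul (α2 * Real.cos (κ * x)))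
    exact ((hφ3 s).hasDerivAt).mul h1
  -- spatial first derivative of the w-expression
  have hWx : ∀ y : ℝ, HasDerivAt
      (fun z => φ3 t * (α0 + α1 * Real.sin (κ * z) * Et t + α2 * Real.cos (κ * z) * Et t))
      (φ3 t * ((α1 * (Real.cos (κ * y) * κ)) * Et t + (α2 * (-Real.sin (κ * y) * κ)) * Et t)) y := by
    intro y
    have hs : HasDerivAt (fun z => Real.sin (κ * z)) (Real.cos (κ * y) * κ) y := by
      simpa using ((hasDerivAt_id y).const_mul κ).sin
    have hco : HasDerivAt (fun z => Real.cos (κ * z)) (-Real.sin (κ * y) * κ) y := by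
      simpa using ((hasDerivAt_id y).const_mul κ).cos
    have h1 : HasDerivAt
        (fun z => α0 + α1 * Real.sin (κ * z) * Et t + α2 * Real.cos (κ * z) * Et t)
        ((α1 * (Real.cos (κ * y) * κ)) * Et t + (α2 * (-Real.sin (κ * y) * κ)) * Et t) y := by
      exact ((((hs.const_mul α1).mul_const (Et t)).const_add α0).add
        ((hco.const_mul α2).mul_const (Et t)))
    exact h1.const_mul (φ3 t)
  -- spatial second derivative of the w-expression
  have hWxx : HasDerivAt
      (fun y => φ3 t * ((α1 * (Real.cos (κ * y) * κ)) * Et t + (α2 * (-Real.sin (κ * y) * κ)) * Et t))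
      (-κ ^ 2 * (φ3 t * (α1 * Real.sin (κ * x) * Et t + α2 * Real.cos (κ * x) * Et t))) x := by
    have hs : HasDerivAt (fun z => Real.sin (κ * z)) (Real.cos (κ * x) * κ) x := by
      simpa using ((hasDerivAt_id x).const_mul κ).sin
    have hco : HasDerivAt (fun z => Real.cos (κ * z)) (-Real.sin (κ * x) * κ) x := by
      simpa using ((hasDerivAt_id x).const_mul κ).cos
    have h1 : HasDerivAt
        (fun y => (α1 * (Real.cos (κ * y) * κ)) * Et t + (α2 * (-Real.sin (κ * y) * κ)) * Et t)
        (((α1 * (-Real.sin (κ * x) * κ * κ)) * Et t + (α2 * (-(Real.cos (κ * x) * κ) * κ)) * Et t)) x := by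
      have ha : HasDerivAt (fun y => (α1 * (Real.cos (κ * y) * κ)) * Et t)
          ((α1 * (-Real.sin (κ * x) * κ * κ)) * Et t) x := by
        have := ((hco.mul_const κ).const_mul α1).mul_const (Et t)
        convert this using 1
      have hb : HasDerivAt (fun y => (α2 * (-Real.sin (κ * y) * κ)) * Et t)
          ((α2 * (-(Real.cos (κ * x) * κ) * κ)) * Et t) x := by
        have := (((hs.neg).mul_const κ).const_mul α2).mul_const (Et t)
        convert this using 1
        all_goals rfl
      exact ha.add hb
    have h2 := h1.const_mul (φ3 t)
    convert h2 using 1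
    case e'_9 => ring
    all_goals rfl
  -- rewrite each function of interest
  have hwfun : ∀ y : ℝ, (fun s => w s y) =
      fun s => φ3 s * (α0 + α1 * Real.sin (κ * y) * Et s + α2 * Real.cos (κ * y) * Et s) :=
    fun y => funext fun s => hw s y
  have hwfunx : (fun z => w t z) =
      fun z => φ3 t * (α0 + α1 * Real.sin (κ * z) * Et t + α2 * Real.cos (κ * z) * Et t) :=
    funext fun z => hw t z
  have hufun : (fun s => u s x) =
      fun s => φ1 s + c * (φ3 s * (α0 + α1 * Real.sin (κ * x) * Et s + α2 * Real.cos (κ * x) * Et s)) :=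
    funext fun s => by rw [hu s x, hw s x]
  have hufunx : (fun z => u t z) =
      fun z => φ1 t + c * (φ3 t * (α0 + α1 * Real.sin (κ * z) * Et t + α2 * Real.cos (κ * z) * Et t)) :=
    funext fun z => by rw [hu t z, hw t z]
  have hvfun : (fun s => v s x) =
      fun s => φ2 s - c * (φ3 s * (α0 + α1 * Real.sin (κ * x) * Et s + α2 * Real.cos (κ * x) * Et s)) :=
    funext fun s => by rw [hv s x, hw s x]
  have hvfunx : (fun z => v t z) =
      fun z => φ2 t - c * (φ3 t * (α0 + α1 * Real.sin (κ * z) * Et t + α2 * Real.cos (κ * z) * Et t)) :=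
    funext fun z => by rw [hv t z, hw t z]
  -- the three spatial second derivatives
  have hwx1 : deriv (fun z => w t z) =
      fun y => φ3 t * ((α1 * (Real.cos (κ * y) * κ)) * Et t + (α2 * (-Real.sin (κ * y) * κ)) * Et t) := by
    funext y; rw [hwfunx]; exact (hWx y).deriv
  have hwxx : deriv (fun y => deriv (fun z => w t z) y) x
      = -κ ^ 2 * (φ3 t * (α1 * Real.sin (κ * x) * Et t + α2 * Real.cos (κ * x) * Et t)) := by
    rw [show (fun y => deriv (fun z => w t z) y) = deriv (fun z => w t z) from rfl, hwx1]
    exact hWxx.deriv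
  have hux1 : deriv (fun z => u t z) =
      fun y => c * (φ3 t * ((α1 * (Real.cos (κ * y) * κ)) * Et t + (α2 * (-Real.sin (κ * y) * κ)) * Et t)) := by
    funext y; rw [hufunx]; exact (((hWx y).const_mul c).const_add (φ1 t)).deriv
  have huxx : deriv (fun y => deriv (fun z => u t z) y) x
      = c * (-κ ^ 2 * (φ3 t * (α1 * Real.sin (κ * x) * Et t + α2 * Real.cos (κ * x) * Et t))) := by
    rw [show (fun y => deriv (fun z => u t z) y) = deriv (fun z => u t z) from rfl, hux1]
    exact (hWxx.const_mul c).deriv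
  have hvx1 : deriv (fun z => v t z) =
      fun y => -(c * (φ3 t * ((α1 * (Real.cos (κ * y) * κ)) * Et t + (α2 * (-Real.sin (κ * y) * κ)) * Et t))) := by
    funext y; rw [hvfunx]
    have := (((hWx y).const_mul c).neg).const_add (φ2 t)
    have h2 : HasDerivAt (fun z => φ2 t - c * (φ3 t * (α0 + α1 * Real.sin (κ * z) * Et t + α2 * Real.cos (κ * z) * Et t)))
        (-(c * (φ3 t * ((α1 * (Real.cos (κ * y) * κ)) * Et t + (α2 * (-Real.sin (κ * y) * κ)) * Et t)))) y := by
      convert this using 2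
      case e'_8 => rw [Pi.neg_apply, sub_eq_add_neg]
      all_goals rfl
    exact h2.deriv
  have hvxx : deriv (fun y => deriv (fun z => v t z) y) x
      = -(c * (-κ ^ 2 * (φ3 t * (α1 * Real.sin (κ * x) * Et t + α2 * Real.cos (κ * x) * Et t)))) := by
    rw [show (fun y => deriv (fun z => v t z) y) = deriv (fun z => v t z) from rfl, hvx1]
    exact ((hWxx.const_mul c).neg).deriv
  -- time derivatives
  have hwt : deriv (fun s => w s x) t
      = deriv φ3 t * (α0 + α1 * Real.sin (κ * x) * Et t + α2 * Real.cos (κ * x) * Et t)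
        + φ3 t * ((α1 * Real.sin (κ * x)) * (-d3 * κ ^ 2 * Et t)
            + (α2 * Real.cos (κ * x)) * (-d3 * κ ^ 2 * Et t)) := by
    rw [hwfun x]; exact (hWt t).deriv
  have hut : deriv (fun s => u s x) t
      = deriv φ1 t + c * (deriv φ3 t * (α0 + α1 * Real.sin (κ * x) * Et t + α2 * Real.cos (κ * x) * Et t)
        + φ3 t * ((α1 * Real.sin (κ * x)) * (-d3 * κ ^ 2 * Et t)
            + (α2 * Real.cos (κ * x)) * (-d3 * κ ^ 2 * Et t))) := by
    rw [hufun]; exact (((hφ1 t).hasDerivAt).add ((hWt t).const_mul c)).deriv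
  have hvt : deriv (fun s => v s x) t
      = deriv φ2 t - c * (deriv φ3 t * (α0 + α1 * Real.sin (κ * x) * Et t + α2 * Real.cos (κ * x) * Et t)
        + φ3 t * ((α1 * Real.sin (κ * x)) * (-d3 * κ ^ 2 * Et t)
            + (α2 * Real.cos (κ * x)) * (-d3 * κ ^ 2 * Et t))) := by
    rw [hvfun]; exact (((hφ2 t).hasDerivAt).sub ((hWt t).const_mul c)).deriv
  -- ODE rearrangements
  have h1 : deriv φ1 t = (α0 * (d1 - d3) / (d1 - d2)) * φ3 t - φ1 t * (φ1 t + φ2 t - 1) := by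
    have := hode1 t; linarith
  have h2 : deriv φ2 t = -((d2 - d3) / (d1 - d3)) * (φ2 t * (φ1 t + φ2 t - 1))
      - (α0 * (d2 - d3) / (d1 - d2)) * φ3 t := by
    have := hode2 t; linarith
  have h3 : deriv φ3 t = -(φ3 t * (φ1 t + φ2 t)) := by
    have := hode3 t; linarith
  obtain ⟨q, hq⟩ : ∃ q : ℝ, q = α1 * Real.sin (κ * x) * Et t + α2 * Real.cos (κ * x) * Et t :=
    ⟨_, rfl⟩
  have hww : w t x = φ3 t * (α0 + q) := by rw [hw t x, hq]; ring
  have hwt' : deriv (fun s => w s x) t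
      = deriv φ3 t * (α0 + q) + φ3 t * (-d3 * κ ^ 2 * q) := by rw [hwt, hq]; ring
  have hwxx' : deriv (fun y => deriv (fun z => w t z) y) x = -κ ^ 2 * (φ3 t * q) := by
    rw [hwxx, hq]
  have hut' : deriv (fun s => u s x) t
      = deriv φ1 t + c * (deriv φ3 t * (α0 + q) + φ3 t * (-d3 * κ ^ 2 * q)) := by
    rw [hut, hq]; ring
  have huxx' : deriv (fun y => deriv (fun z => u t z) y) x = c * (-κ ^ 2 * (φ3 t * q)) := by
    rw [huxx, hq]
  have hvt' : deriv (fun s => v s x) t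
      = deriv φ2 t - c * (deriv φ3 t * (α0 + q) + φ3 t * (-d3 * κ ^ 2 * q)) := by
    rw [hvt, hq]; ring
  have hvxx' : deriv (fun y => deriv (fun z => v t z) y) x
      = -(c * (-κ ^ 2 * (φ3 t * q))) := by
    rw [hvxx, hq]
  obtain ⟨k2, hk2d⟩ : ∃ k2 : ℝ, κ ^ 2 = k2 := ⟨_, rfl⟩
  have hk2rel : k2 * (d1 - d3) = 1 := by rw [← hk2d, hκ2]; field_simp
  obtain ⟨r, hrd⟩ : ∃ r : ℝ, (d2 - d3) / (d1 - d3) = r := ⟨_, rfl⟩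
  have hrrel : r * (d1 - d3) = d2 - d3 := by rw [← hrd]; field_simp
  have hcrel : c * (d1 - d2) = d1 - d3 := by rw [hc]; field_simp
  have h1' : deriv φ1 t = α0 * c * φ3 t - φ1 t * (φ1 t + φ2 t - 1) := by
    rw [h1, hc]; ring
  have h2' : deriv φ2 t = -(r * (φ2 t * (φ1 t + φ2 t - 1))) - α0 * (c * r) * φ3 t := by
    rw [h2, hc, ← hrd]; field_simp
  refine ⟨?_, ?_, ?_⟩
  · rw [hut', huxx', hu t x, hv t x, hww, h1', h3, hk2d]
    linear_combination (c * φ3 t * q) * hk2rel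
  · rw [hvt', hvxx', hu t x, hv t x, hww, h2', h3, hk2d, hrd]
    linear_combination
      ((φ1 t + φ2 t) * (φ3 t * (α0 + q)) * k2) * hcrel
      + (c * φ3 t * q * k2 - (φ1 t + φ2 t) * (φ3 t * (α0 + q)) * c * k2) * hrrel
      + ((φ1 t + φ2 t) * (φ3 t * (α0 + q)) * (1 + c * r - c) - c * φ3 t * q * r) * hk2rel
  · rw [hwt', hwxx', hu t x, hv t x, hww, h3, hk2d]
    ring
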